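/- If P is a stable set of assignments (SSA) for a CNF formula H with respect to an AC-mapping Φ and center p_init, then the formula H is unsatisfiable. -/

import Mathlib

open Function

abbrev Clause (V : Type*) := Finset (V × Bool)
abbrev CNF (V : Type*) := Set (Clause V)

def satLit {V : Type*} (p : V → Bool) (l : V × Bool) : Prop := p l.1 = l.2

def satClause {V : Type*} (p : V → Bool) (C : Clause V) : Prop := ∃ l ∈ C, satLit p l

def satCNF {V : Type*} (p : V → Bool) (H : CNF V) : Prop := ∀ C ∈ H, satClause p C

def falsifies {V : Type*} (p : V → Bool) (C : Clause V) : Prop := ¬ satClause p C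

/-- Hamming distance between two assignments. -/
def hdist {V : Type*} [Fintype V] [DecidableEq V] (p q : V → Bool) : ℕ :=
  (Finset.univ.filter fun v => p v ≠ q v).card

/-- The assignment obtained from `p` by flipping the value of variable `v`. -/
def flipAt {V : Type*} [DecidableEq V] (p : V → Bool) (v : V) : V → Bool :=
  Function.update p v (!p v)

/-- `Nbhd p C`: assignments at Hamming distance 1 from `p` satisfying `C`. -/
def Nbhd {V : Type*} [Fintype V] [DecidableEq V] (p : V → Bool) (C : Clause V) :
    Set (V → Bool) :=
  {r | hdist p r = 1 ∧ satClause r C}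

/-- `NbhdC q p C`: members of `Nbhd p C` strictly farther from `q` than `p` is. -/
def NbhdC {V : Type*} [Fintype V] [DecidableEq V] (q p : V → Bool) (C : Clause V) :
    Set (V → Bool) :=
  {r | hdist p r = 1 ∧ satClause r C ∧ hdist q r > hdist q p}

/-- `P` is a stable set of assignments (SSA) of `H` with center `pinit` and AC-mapping `Φ`. -/
def IsSSA {V : Type*} [Fintype V] [DecidableEq V] (H : CNF V) (P : Set (V → Bool))
    (pinit : V → Bool) (Φ : (V → Bool) → Clause V) : Prop :=
  pinit ∈ P ∧ ∀ p ∈ P, Φ p ∈ H ∧ falsifies p (Φ p) ∧ NbhdC pinit p (Φ p) ⊆ P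


section Helpers
variable {V : Type*} [Fintype V] [DecidableEq V]

lemma hdist_eq_zero_iff (p q : V → Bool) : hdist p q = 0 ↔ p = q := by
  constructor
  · intro h
    funext v
    by_contra hv
    have : v ∈ Finset.univ.filter fun w => p w ≠ q w := by simp [hv]
    simp [hdist, Finset.card_eq_zero] at h
    exact hv (@h v)
  · intro h; subst h; simp [hdist]

lemma filter_flipAt (q p : V → Bool) (v : V) :
    (Finset.univ.filter fun w => q w ≠ flipAt p v w) =
      if q v = p v then insert v (Finset.univ.filter fun w => q w ≠ p w)
      else (Finset.univ.filter fun w => q w ≠ p w).erase v := by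
  split_ifs with h
  · ext w
    by_cases hw : w = v <;> simp [hw, flipAt, Function.update, h]
  · ext w
    by_cases hw : w = v <;> simp [hw, flipAt, Function.update, h]

lemma hdist_flipAt_of_eq (q p : V → Bool) (v : V) (h : q v = p v) :
    hdist q (flipAt p v) = hdist q p + 1 := by
  unfold hdist
  rw [filter_flipAt, if_pos h, Finset.card_insert_of_notMem (by simp [h])]

lemma hdist_flipAt_of_ne (q p : V → Bool) (v : V) (h : q v ≠ p v) :
    hdist q (flipAt p v) + 1 = hdist q p := by
  unfold hdist
  rw [filter_flipAt, if_neg h, Finset.card_erase_add_one (by simp [h])]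

lemma hdist_self_flipAt (p : V → Bool) (v : V) : hdist p (flipAt p v) = 1 := by
  rw [hdist_flipAt_of_eq p p v rfl]
  simp [hdist]

end Helpers

/-- an SSA of `H` witnesses unsatisfiability of `H`. -/

theorem ssa_implies_unsat {V : Type*} [Fintype V] [DecidableEq V]
    (H : CNF V) (P : Set (V → Bool)) (pinit : V → Bool)
    (Φ : (V → Bool) → Clause V) (h : IsSSA H P pinit Φ) :
    ¬ ∃ s : V → Bool, satCNF s H := by
  rintro ⟨s, hs⟩
  obtain ⟨hpinit, hP⟩ := h
  -- key induction: no p ∈ P lying "between" pinit and s can exist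
  have key : ∀ n : ℕ, ∀ p ∈ P, (∀ v, p v = pinit v ∨ p v = s v) → hdist s p = n → False := by
    intro n
    induction n using Nat.strong_induction_on with
    | _ n ih =>
      intro p hp hbetween hd
      obtain ⟨hΦH, hfals, hsub⟩ := hP p hp
      rcases Nat.eq_zero_or_pos n with hn | hn
      · -- p = s, but p falsifies Φ p ∈ H while s satisfies H
        subst hn
        have : s = p := (hdist_eq_zero_iff s p).mp hd
        exact hfals (this ▸ hs (Φ p) hΦH)
      · -- s satisfies Φ p at some literal falsified by p
        obtain ⟨⟨v, b⟩, hvC, hsv⟩ := hs (Φ p) hΦH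
        have hpv : p v ≠ b := fun habs => hfals ⟨(v, b), hvC, habs⟩
        have hps : p v ≠ s v := fun habs => hpv (habs.trans hsv)
        have hppi : p v = pinit v := (hbetween v).resolve_right hps
        set r := flipAt p v with hr
        have hrP : r ∈ P := by
          apply hsub
          refine ⟨hdist_self_flipAt p v, ⟨(v, b), hvC, ?_⟩, ?_⟩
          · show r v = b
            have : r v = !p v := by simp [hr, flipAt, Function.update]
            rw [this]
            cases hb : p v <;> cases b <;> simp_all
          · have := hdist_flipAt_of_eq pinit p v hppi.symm
            show hdist pinit (flipAt p v) > hdist pinit p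
            omega
        have hsr : hdist s r + 1 = hdist s p :=
          hdist_flipAt_of_ne s p v (fun habs => hps habs.symm)
        refine ih (hdist s r) (by omega) r hrP ?_ rfl
        intro w
        by_cases hw : w = v
        · right
          subst hw
          have h1 : r w = !p w := by simp [hr, flipAt, Function.update]
          have h2 : s w = b := hsv
          rw [h1, h2]
          cases hb : p w <;> cases b <;> simp_all
        · have : r w = p w := by simp [hr, flipAt, Function.update, hw]
          rw [this]; exact hbetween w
  exact key (hdist s pinit) pinit hpinit (fun v => Or.inl rfl) rfl
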